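/- The labelled density of R_5 in R_{2n+1} tends to 1/384 as n → ∞; equivalently, the unlabelled density p(R_5; R_{2n+1}) tends to 1/16. -/

import Mathlib

def IsTournament {V : Type*} (r : V → V → Prop) : Prop :=
  (∀ v, ¬ r v v) ∧ (∀ v w : V, v ≠ w → (r v w ↔ ¬ r w v))

def carousel (n : ℕ) (v w : ZMod (2*n+1)) : Prop :=
  ∃ i : ℕ, 1 ≤ i ∧ i ≤ n ∧ w = v + (i : ZMod (2*n+1))

noncomputable def numEmb (n : ℕ) : ℕ :=
  Nat.card {f : ZMod (2*2+1) → ZMod (2*n+1) //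
    Function.Injective f ∧ ∀ v w, carousel 2 v w → carousel n (f v) (f w)}

lemma carousel_iff (n : ℕ) (a b : ZMod (2*n+1)) :
    carousel n a b ↔ 1 ≤ (b - a).val ∧ (b - a).val ≤ n := by
  haveI : NeZero (2*n+1) := ⟨by omega⟩
  constructor
  · rintro ⟨i, h1, h2, rfl⟩
    rw [add_sub_cancel_left, ZMod.val_cast_of_lt (by omega)]
    exact ⟨h1, h2⟩
  · rintro ⟨h1, h2⟩
    exact ⟨(b-a).val, h1, h2, by rw [ZMod.natCast_zmod_val]; ring⟩

lemma carousel_ne {n : ℕ} {a b : ZMod (2*n+1)} (h : carousel n a b) : a ≠ b := by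
  rintro rfl
  have := (carousel_iff n a a).1 h
  simp at this

lemma carousel2_iff (v w : ZMod (2*2+1)) : carousel 2 v w ↔ w = v + 1 ∨ w = v + 2 := by
  rw [carousel_iff]
  revert v w
  decide

lemma carousel2_total (v w : ZMod (2*2+1)) (h : v ≠ w) : carousel 2 v w ∨ carousel 2 w v := by
  rw [carousel2_iff, carousel2_iff]
  revert h; revert v w
  decide

def Qcond (n : ℕ) (q : (ℕ×ℕ)×ℕ×ℕ) : Prop :=
  1 ≤ q.1.1 ∧ q.1.1 < q.1.2 ∧ q.1.2 ≤ n ∧ n+1 ≤ q.2.1 ∧ q.2.1 ≤ q.1.1 + n ∧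
    q.1.1 + n + 1 ≤ q.2.2 ∧ q.2.2 ≤ q.1.2 + n

def dval (q : (ℕ×ℕ)×ℕ×ℕ) (v : ZMod (2*2+1)) : ℕ :=
  if v = 0 then 0 else if v = 1 then q.1.1 else if v = 2 then q.1.2
  else if v = 3 then q.2.1 else q.2.2

lemma dval0 (q : (ℕ×ℕ)×ℕ×ℕ) : dval q 0 = 0 := rfl
lemma dval1 (q : (ℕ×ℕ)×ℕ×ℕ) : dval q 1 = q.1.1 := rfl
lemma dval2 (q : (ℕ×ℕ)×ℕ×ℕ) : dval q 2 = q.1.2 := rfl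
lemma dval3 (q : (ℕ×ℕ)×ℕ×ℕ) : dval q 3 = q.2.1 := rfl
lemma dval4 (q : (ℕ×ℕ)×ℕ×ℕ) : dval q 4 = q.2.2 := rfl

def gfun (n : ℕ) (t : ZMod (2*n+1)) (q : (ℕ×ℕ)×ℕ×ℕ) : ZMod (2*2+1) → ZMod (2*n+1) :=
  fun v => t + (dval q v : ZMod (2*n+1))

lemma carousel_of (n : ℕ) (t : ZMod (2*n+1)) (p r : ℕ) (h1 : p ≤ r) (hlo : 1 ≤ r - p)
    (hhi : r - p ≤ n) : carousel n (t + (p : ZMod (2*n+1))) (t + (r : ZMod (2*n+1))) :=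
  ⟨r - p, hlo, hhi, by rw [add_assoc, ← Nat.cast_add, Nat.add_sub_cancel' h1]⟩

lemma carousel_of' (n : ℕ) (t : ZMod (2*n+1)) (p r : ℕ) (h1 : p ≤ r + (2*n+1))
    (hlo : 1 ≤ r + (2*n+1) - p) (hhi : r + (2*n+1) - p ≤ n) :
    carousel n (t + (p : ZMod (2*n+1))) (t + (r : ZMod (2*n+1))) :=
  ⟨r + (2*n+1) - p, hlo, hhi, by
    have : ((p + (r + (2*n+1) - p) : ℕ) : ZMod (2*n+1)) = (r : ZMod (2*n+1)) := by
      rw [Nat.add_sub_cancel' h1]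
      rw [Nat.cast_add, ZMod.natCast_self, add_zero]
    rw [add_assoc, ← Nat.cast_add, this]⟩

lemma backward (n : ℕ) (t : ZMod (2*n+1)) (q : (ℕ×ℕ)×ℕ×ℕ) (hq : Qcond n q) :
    ∀ v w, carousel 2 v w → carousel n (gfun n t q v) (gfun n t q w) := by
  obtain ⟨⟨x1, x2⟩, x3, x4⟩ := q
  have h1 : 1 ≤ x1 := hq.1
  have h2 : x1 < x2 := hq.2.1
  have h3 : x2 ≤ n := hq.2.2.1
  have h4 : n+1 ≤ x3 := hq.2.2.2.1
  have h5 : x3 ≤ x1 + n := hq.2.2.2.2.1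
  have h6 : x1 + n + 1 ≤ x4 := hq.2.2.2.2.2.1
  have h7 : x4 ≤ x2 + n := hq.2.2.2.2.2.2
  clear hq
  intro v w hc
  rw [carousel2_iff] at hc
  have hv := (by decide : ∀ u : ZMod (2*2+1), u = 0 ∨ u = 1 ∨ u = 2 ∨ u = 3 ∨ u = 4) v
  rcases hv with rfl | rfl | rfl | rfl | rfl <;> rcases hc with rfl | rfl <;>
    simp only [show (0+1 : ZMod (2*2+1)) = 1 by decide, show (0+2 : ZMod (2*2+1)) = 2 by decide,
      show (1+1 : ZMod (2*2+1)) = 2 by decide, show (1+2 : ZMod (2*2+1)) = 3 by decide,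
      show (2+1 : ZMod (2*2+1)) = 3 by decide, show (2+2 : ZMod (2*2+1)) = 4 by decide,
      show (3+1 : ZMod (2*2+1)) = 4 by decide, show (3+2 : ZMod (2*2+1)) = 0 by decide,
      show (4+1 : ZMod (2*2+1)) = 0 by decide, show (4+2 : ZMod (2*2+1)) = 1 by decide,
      gfun, dval0, dval1, dval2, dval3, dval4] <;>
    first
      | exact carousel_of n t _ _ (by omega) (by omega) (by omega)
      | exact carousel_of' n t _ _ (by omega) (by omega) (by omega)

lemma backward_inj (n : ℕ) (t : ZMod (2*n+1)) (q : (ℕ×ℕ)×ℕ×ℕ) (hq : Qcond n q) :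
    Function.Injective (gfun n t q) := by
  intro v w h
  by_contra hne
  rcases carousel2_total v w hne with hc | hc
  · exact carousel_ne (backward n t q hq v w hc) h
  · exact carousel_ne (backward n t q hq w v hc) h.symm

lemma forward (n : ℕ) (f : ZMod (2*2+1) → ZMod (2*n+1))
    (hf : ∀ v w, carousel 2 v w → carousel n (f v) (f w)) :
    Qcond n (((f 1 - f 0).val, (f 2 - f 0).val), (f 3 - f 0).val, (f 4 - f 0).val) := by
  haveI : NeZero (2*n+1) := ⟨by omega⟩
  have a01 := (carousel_iff n _ _).1 (hf 0 1 ((carousel2_iff 0 1).2 (by decide)))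
  have a02 := (carousel_iff n _ _).1 (hf 0 2 ((carousel2_iff 0 2).2 (by decide)))
  have a12 := (carousel_iff n _ _).1 (hf 1 2 ((carousel2_iff 1 2).2 (by decide)))
  have a13 := (carousel_iff n _ _).1 (hf 1 3 ((carousel2_iff 1 3).2 (by decide)))
  have a23 := (carousel_iff n _ _).1 (hf 2 3 ((carousel2_iff 2 3).2 (by decide)))
  have a24 := (carousel_iff n _ _).1 (hf 2 4 ((carousel2_iff 2 4).2 (by decide)))
  have a30 := (carousel_iff n _ _).1 (hf 3 0 ((carousel2_iff 3 0).2 (by decide)))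
  have a40 := (carousel_iff n _ _).1 (hf 4 0 ((carousel2_iff 4 0).2 (by decide)))
  have a41 := (carousel_iff n _ _).1 (hf 4 1 ((carousel2_iff 4 1).2 (by decide)))
  set x1 := (f 1 - f 0).val with hx1
  set x2 := (f 2 - f 0).val with hx2
  set x3 := (f 3 - f 0).val with hx3
  set x4 := (f 4 - f 0).val with hx4
  set d12 := (f 2 - f 1).val with hd12
  set d23 := (f 3 - f 2).val with hd23
  set d24 := (f 4 - f 2).val with hd24
  have e2 : x2 = d12 + x1 := by
    rw [hx2, show f 2 - f 0 = (f 2 - f 1) + (f 1 - f 0) from (sub_add_sub_cancel _ _ _).symm,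
      ZMod.val_add_of_lt (by omega)]
  have e3 : x3 = d23 + x2 := by
    rw [hx3, show f 3 - f 0 = (f 3 - f 2) + (f 2 - f 0) from (sub_add_sub_cancel _ _ _).symm,
      ZMod.val_add_of_lt (by omega)]
  have e4 : x4 = d24 + x2 := by
    rw [hx4, show f 4 - f 0 = (f 4 - f 2) + (f 2 - f 0) from (sub_add_sub_cancel _ _ _).symm,
      ZMod.val_add_of_lt (by omega)]
  have e13 : (f 3 - f 1).val = d23 + d12 := by
    rw [show f 3 - f 1 = (f 3 - f 2) + (f 2 - f 1) from (sub_add_sub_cancel _ _ _).symm,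
      ZMod.val_add_of_lt (by omega)]
  rw [e13] at a13
  haveI n3 : NeZero (f 3 - f 0) := ⟨by
    intro h
    have : x3 = 0 := by rw [hx3, h, ZMod.val_zero]
    omega⟩
  haveI n4 : NeZero (f 4 - f 0) := ⟨by
    intro h
    have : x4 = 0 := by rw [hx4, h, ZMod.val_zero]
    omega⟩
  have v3 : (f 0 - f 3).val = 2*n+1 - x3 := by
    rw [show f 0 - f 3 = -(f 3 - f 0) by ring, ZMod.val_neg_of_ne_zero]
  have v4 : (f 0 - f 4).val = 2*n+1 - x4 := by
    rw [show f 0 - f 4 = -(f 4 - f 0) by ring, ZMod.val_neg_of_ne_zero]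
  rw [v3] at a30
  rw [v4] at a40
  have hx3lt : x3 < 2*n+1 := ZMod.val_lt _
  have hx4lt : x4 < 2*n+1 := ZMod.val_lt _
  have e41 : (f 1 - f 4).val = x1 + (2*n+1 - x4) := by
    rw [show f 1 - f 4 = (f 1 - f 0) + (f 0 - f 4) from (sub_add_sub_cancel _ _ _).symm,
      ZMod.val_add_of_lt (by rw [v4]; omega), v4]
  rw [e41] at a41
  exact ⟨show 1 ≤ x1 by omega, show x1 < x2 by omega, show x2 ≤ n by omega,
    show n+1 ≤ x3 by omega, show x3 ≤ x1+n by omega, show x1+n+1 ≤ x4 by omega,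
    show x4 ≤ x2+n by omega⟩

noncomputable def embEquiv (n : ℕ) :
    {f : ZMod (2*2+1) → ZMod (2*n+1) //
      Function.Injective f ∧ ∀ v w, carousel 2 v w → carousel n (f v) (f w)} ≃
    ZMod (2*n+1) × {q : (ℕ×ℕ)×ℕ×ℕ // Qcond n q} where
  toFun F := (F.1 0, ⟨(((F.1 1 - F.1 0).val, (F.1 2 - F.1 0).val),
    (F.1 3 - F.1 0).val, (F.1 4 - F.1 0).val), forward n F.1 F.2.2⟩)
  invFun p := ⟨gfun n p.1 p.2.1, backward_inj n p.1 p.2.1 p.2.2, backward n p.1 p.2.1 p.2.2⟩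
  left_inv F := by
    haveI : NeZero (2*n+1) := ⟨by omega⟩
    obtain ⟨f, hf⟩ := F
    apply Subtype.ext
    funext v
    have hv := (by decide : ∀ u : ZMod (2*2+1), u = 0 ∨ u = 1 ∨ u = 2 ∨ u = 3 ∨ u = 4) v
    rcases hv with rfl | rfl | rfl | rfl | rfl <;>
      simp only [gfun, dval0, dval1, dval2, dval3, dval4, Nat.cast_zero, add_zero,
        ZMod.natCast_zmod_val] <;> ring
  right_inv p := by
    haveI : NeZero (2*n+1) := ⟨by omega⟩
    obtain ⟨t, ⟨⟨⟨x1, x2⟩, x3, x4⟩, hq⟩⟩ := p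
    have h1 : 1 ≤ x1 := hq.1
    have h2 : x1 < x2 := hq.2.1
    have h3 : x2 ≤ n := hq.2.2.1
    have h5 : x3 ≤ x1 + n := hq.2.2.2.2.1
    have h7 : x4 ≤ x2 + n := hq.2.2.2.2.2.2
    have key : ∀ y : ℕ, y < 2*n+1 →
        ((t + (y : ZMod (2*n+1))) - (t + ((0:ℕ) : ZMod (2*n+1)))).val = y := by
      intro y hy
      rw [Nat.cast_zero, add_zero, add_sub_cancel_left, ZMod.val_cast_of_lt hy]
    refine Prod.ext ?_ (Subtype.ext ?_)
    · show gfun n t ((x1,x2),x3,x4) 0 = t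
      simp [gfun, dval0]
    · show ((((gfun n t ((x1,x2),x3,x4)) 1 - (gfun n t ((x1,x2),x3,x4)) 0).val,
        ((gfun n t ((x1,x2),x3,x4)) 2 - (gfun n t ((x1,x2),x3,x4)) 0).val),
        ((gfun n t ((x1,x2),x3,x4)) 3 - (gfun n t ((x1,x2),x3,x4)) 0).val,
        ((gfun n t ((x1,x2),x3,x4)) 4 - (gfun n t ((x1,x2),x3,x4)) 0).val) = ((x1,x2),x3,x4)
      simp only [gfun, dval0, dval1, dval2, dval3, dval4]
      rw [key x1 (by omega), key x2 (by omega), key x3 (by omega), key x4 (by omega)]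

lemma sum_sub_choose (k : ℕ) : ∀ M : ℕ,
    ∑ x ∈ Finset.range M, (x-1).choose (k+1) = (M-1).choose (k+2) := by
  intro M
  induction M with
  | zero => simp
  | succ M ih =>
    rw [Finset.sum_range_succ, ih]
    rcases M with _ | M
    · simp
    · simp only [Nat.succ_sub_one]
      rw [Nat.choose_succ_succ M (k+1)]
      show M.choose (k + 2) + M.choose (k + 1) = M.choose (k+1) + M.choose (k + 2)
      omega

def Ccond (N : ℕ) (q : (ℕ×ℕ)×ℕ×ℕ) : Prop :=
  1 ≤ q.2.2 ∧ q.2.2 < q.2.1 ∧ q.2.1 < q.1.2 ∧ q.1.2 < q.1.1 ∧ q.1.1 ≤ N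

instance (N : ℕ) : DecidablePred (Ccond N) := fun _ => by unfold Ccond; infer_instance

lemma lvl1 (N b : ℕ) (P : Prop) [Decidable P] (hP : P → b ≤ N+1) :
    ∑ a ∈ Finset.range (N+1), (if 1 ≤ a ∧ a < b ∧ P then 1 else 0) =
      if P then (b-1).choose 1 else 0 := by
  by_cases hp : P
  · simp only [hp, and_true, if_true]
    have hfil : Finset.filter (fun a => 1 ≤ a ∧ a < b) (Finset.range (N+1)) =
        Finset.Ico 1 b := by
      ext x
      simp only [Finset.mem_filter, Finset.mem_range, Finset.mem_Ico]
      have := hP hp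
      omega
    rw [← Finset.sum_filter, hfil]
    simp [Nat.choose_one_right]
  · simp [hp]

lemma lvl (N y : ℕ) (P : Prop) [Decidable P] (g : ℕ → ℕ) (hP : P → y ≤ N+1) :
    ∑ x ∈ Finset.range (N+1), (if x < y ∧ P then g x else 0) =
      if P then ∑ x ∈ Finset.range y, g x else 0 := by
  by_cases hp : P
  · simp only [hp, and_true, if_true]
    rw [← Finset.sum_filter]
    congr 1
    ext x
    simp only [Finset.mem_filter, Finset.mem_range]
    have := hP hp
    omega
  · simp [hp]

lemma chain_card (N : ℕ) :
    Nat.card {q : (ℕ×ℕ)×ℕ×ℕ // Ccond N q} = N.choose 4 := by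
  classical
  have e : {q : (ℕ×ℕ)×ℕ×ℕ // Ccond N q} ≃
      {q // q ∈ (((Finset.range (N+1) ×ˢ Finset.range (N+1)) ×ˢ
        (Finset.range (N+1) ×ˢ Finset.range (N+1))).filter (Ccond N))} :=
    Equiv.subtypeEquivRight (fun q => by
      simp only [Finset.mem_filter, Finset.mem_product, Finset.mem_range]
      unfold Ccond
      constructor
      · intro h; omega
      · intro h; omega)
  rw [Nat.card_congr e, Nat.card_eq_finsetCard, Finset.card_filter,
    Finset.sum_product]
  have step : ∀ x ∈ Finset.range (N+1) ×ˢ Finset.range (N+1),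
      (∑ y ∈ Finset.range (N+1) ×ˢ Finset.range (N+1), if Ccond N (x, y) then 1 else 0) =
      if x.2 < x.1 ∧ x.1 ≤ N then (x.2 - 1).choose 2 else 0 := by
    rintro ⟨d, c⟩ -
    rw [Finset.sum_product]
    have inner1 : ∀ b ∈ Finset.range (N+1),
        (∑ a ∈ Finset.range (N+1), if Ccond N ((d, c), (b, a)) then 1 else 0) =
        if b < c ∧ c < d ∧ d ≤ N then (b-1).choose 1 else 0 := by
      intro b _
      have hiff : ∀ a, Ccond N ((d, c), (b, a)) ↔ (1 ≤ a ∧ a < b ∧ (b < c ∧ c < d ∧ d ≤ N)) := by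
        intro a
        show (1 ≤ a ∧ a < b ∧ b < c ∧ c < d ∧ d ≤ N) ↔ _
        constructor <;> (intro h; omega)
      simp only [hiff]
      exact lvl1 N b _ (by omega)
    rw [Finset.sum_congr rfl inner1, lvl N c _ _ (by omega), sum_sub_choose]
  rw [Finset.sum_congr rfl step, Finset.sum_product]
  have step2 : ∀ d ∈ Finset.range (N+1),
      (∑ c ∈ Finset.range (N+1), if (d, c).2 < (d, c).1 ∧ (d, c).1 ≤ N
        then ((d, c).2 - 1).choose 2 else 0) =
      (d - 1).choose 3 := by
    intro d hd
    have : (∑ c ∈ Finset.range (N+1), if c < d ∧ d ≤ N then (c - 1).choose 2 else 0) =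
        if d ≤ N then (d-1).choose 3 else 0 := by
      rw [lvl N d _ _ (by omega), sum_sub_choose]
    rw [this, if_pos (by simp only [Finset.mem_range] at hd; omega)]
  rw [Finset.sum_congr rfl step2, sum_sub_choose]
  norm_num

noncomputable def QCequiv (n : ℕ) :
    {q : (ℕ×ℕ)×ℕ×ℕ // Qcond n q} ≃ {q : (ℕ×ℕ)×ℕ×ℕ // Ccond (n+2) q} where
  toFun p := ⟨((p.1.1.2+2, p.1.2.2-n+1), (p.1.1.1+1, p.1.2.1-n)), by
    obtain ⟨⟨⟨x1,x2⟩,x3,x4⟩, h⟩ := p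
    have h1 : 1 ≤ x1 := h.1
    have h2 : x1 < x2 := h.2.1
    have h3 : x2 ≤ n := h.2.2.1
    have h4 : n+1 ≤ x3 := h.2.2.2.1
    have h5 : x3 ≤ x1 + n := h.2.2.2.2.1
    have h6 : x1 + n + 1 ≤ x4 := h.2.2.2.2.2.1
    have h7 : x4 ≤ x2 + n := h.2.2.2.2.2.2
    exact ⟨show 1 ≤ x3 - n by omega, show x3 - n < x1 + 1 by omega,
      show x1 + 1 < x4 - n + 1 by omega, show x4 - n + 1 < x2 + 2 by omega,
      show x2 + 2 ≤ n + 2 by omega⟩⟩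
  invFun p := ⟨((p.1.2.1-1, p.1.1.1-2), (p.1.2.2+n, p.1.1.2+n-1)), by
    obtain ⟨⟨⟨d,c⟩,b,a⟩, h⟩ := p
    have h1 : 1 ≤ a := h.1
    have h2 : a < b := h.2.1
    have h3 : b < c := h.2.2.1
    have h4 : c < d := h.2.2.2.1
    have h5 : d ≤ n+2 := h.2.2.2.2
    exact ⟨show 1 ≤ b - 1 by omega, show b - 1 < d - 2 by omega,
      show d - 2 ≤ n by omega, show n + 1 ≤ a + n by omega,
      show a + n ≤ (b-1) + n by omega, show (b-1) + n + 1 ≤ c + n - 1 by omega,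
      show c + n - 1 ≤ (d-2) + n by omega⟩⟩
  left_inv p := by
    obtain ⟨⟨⟨x1,x2⟩,x3,x4⟩, h⟩ := p
    have h1 : 1 ≤ x1 := h.1
    have h4 : n+1 ≤ x3 := h.2.2.2.1
    have h6 : x1 + n + 1 ≤ x4 := h.2.2.2.2.2.1
    apply Subtype.ext
    show ((x1+1-1, x2+2-2), (x3-n+n, x4-n+1+n-1)) = ((x1,x2),x3,x4)
    rw [show x1+1-1 = x1 by omega, show x2+2-2 = x2 by omega,
      show x3-n+n = x3 by omega, show x4-n+1+n-1 = x4 by omega]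
  right_inv p := by
    obtain ⟨⟨⟨d,c⟩,b,a⟩, h⟩ := p
    have h1 : 1 ≤ a := h.1
    have h2 : a < b := h.2.1
    have h3 : b < c := h.2.2.1
    have h4 : c < d := h.2.2.2.1
    apply Subtype.ext
    show ((d-2+2, c+n-1-n+1), (b-1+1, a+n-n)) = ((d,c),b,a)
    rw [show d-2+2 = d by omega, show c+n-1-n+1 = c by omega,
      show b-1+1 = b by omega, show a+n-n = a by omega]

lemma numEmb_eq (n : ℕ) : numEmb n = (2*n+1) * (n+2).choose 4 := by
  rw [numEmb, Nat.card_congr (embEquiv n), Nat.card_prod, Nat.card_zmod,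
    Nat.card_congr (QCequiv n), chain_card]

lemma desc_eq (m : ℕ) : Nat.descFactorial (2*(m+2)+1) 5 =
    (2*m+5)*((2*m+4)*((2*m+3)*((2*m+2)*(2*m+1)))) := by
  rw [Nat.descFactorial_succ, Nat.descFactorial_succ, Nat.descFactorial_succ,
    Nat.descFactorial_succ, Nat.descFactorial_succ, Nat.descFactorial_zero]
  rw [show 2*(m+2)+1-4 = 2*m+1 from by omega, show 2*(m+2)+1-3 = 2*m+2 from by omega,
    show 2*(m+2)+1-2 = 2*m+3 from by omega, show 2*(m+2)+1-1 = 2*m+4 from by omega,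
    show 2*(m+2)+1-0 = 2*m+5 from by omega]
  ring

lemma choose24 (m : ℕ) : Nat.choose (m+4) 4 * 24 = (m+4)*((m+3)*((m+2)*(m+1))) := by
  have h := Nat.descFactorial_eq_factorial_mul_choose (m+4) 4
  rw [Nat.descFactorial_succ, Nat.descFactorial_succ, Nat.descFactorial_succ,
    Nat.descFactorial_succ, Nat.descFactorial_zero] at h
  rw [show m+4-3 = m+1 from by omega, show m+4-2 = m+2 from by omega,
    show m+4-1 = m+3 from by omega, show m+4-0 = m+4 from by omega] at h
  have h24 : (Nat.factorial 4) = 24 := by decide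
  rw [h24] at h
  ring_nf at h ⊢
  linarith

/-- Labelled density of $R_5$ in $R_{2n+1}$: fraction of injections that are embeddings. -/
noncomputable def tindR5 (n : ℕ) : ℝ :=
  (numEmb n : ℝ) / (Nat.descFactorial (2*n+1) 5)

lemma tendsto_main : Filter.Tendsto tindR5 Filter.atTop (nhds (1/384)) := by
  have hg : Filter.Tendsto
      (fun x : ℝ => ((1+2*x)*((1+x)*(1-x))) / (24*((2-x)*((2-2*x)*(2-3*x))*2)))
      (nhds 0) (nhds (1/384)) := by
    have hc : ContinuousAt
        (fun x : ℝ => ((1+2*x)*((1+x)*(1-x))) / (24*((2-x)*((2-2*x)*(2-3*x))*2))) 0 := by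
      apply ContinuousAt.div
      · fun_prop
      · fun_prop
      · norm_num
    have := hc.tendsto
    norm_num at this
    exact this
  have hn : Filter.Tendsto (fun n : ℕ => 1/(n:ℝ)) Filter.atTop (nhds 0) :=
    tendsto_one_div_atTop_nhds_zero_nat
  refine (hg.comp hn).congr' ?_
  rw [Filter.EventuallyEq, Filter.eventually_atTop]
  refine ⟨2, fun n hn2 => ?_⟩
  obtain ⟨m, rfl⟩ : ∃ m, n = m + 2 := ⟨n - 2, by omega⟩
  have hm : ((m:ℝ)+2) ≠ 0 := by positivity
  have hmn : ((m+2:ℕ):ℝ) = (m:ℝ)+2 := by push_cast; ring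
  have e1 : numEmb (m+2) * 24 = (2*m+5) * ((m+4)*((m+3)*((m+2)*(m+1)))) := by
    rw [numEmb_eq, show (2*(m+2)+1) = 2*m+5 from by ring,
      show m+2+2 = m+4 from by ring, mul_assoc, choose24]
  have e1' : (numEmb (m+2) : ℝ) =
      (2*(m:ℝ)+5) * (((m:ℝ)+4)*(((m:ℝ)+3)*(((m:ℝ)+2)*((m:ℝ)+1)))) / 24 := by
    rw [eq_div_iff (by norm_num : (24:ℝ) ≠ 0)]
    exact_mod_cast congrArg (Nat.cast (R := ℝ)) e1
  have e2 : (Nat.descFactorial (2*(m+2)+1) 5 : ℝ) =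
      (2*(m:ℝ)+5)*((2*(m:ℝ)+4)*((2*(m:ℝ)+3)*((2*(m:ℝ)+2)*(2*(m:ℝ)+1)))) := by
    rw [desc_eq]
    push_cast
    ring
  show ((1+2*(1/((m+2:ℕ):ℝ)))*((1+1/((m+2:ℕ):ℝ))*(1-1/((m+2:ℕ):ℝ)))) /
      (24*((2-1/((m+2:ℕ):ℝ))*((2-2*(1/((m+2:ℕ):ℝ)))*(2-3*(1/((m+2:ℕ):ℝ))))*2)) =
    tindR5 (m+2)
  rw [tindR5, e1', e2, hmn]
  have hm0 : (0:ℝ) ≤ (m:ℝ) := Nat.cast_nonneg m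
  have d1 : (2*((m:ℝ)+2)-1) ≠ 0 := by nlinarith
  have d2 : (2*((m:ℝ)+2)-2) ≠ 0 := by nlinarith
  have d3 : (2*((m:ℝ)+2)-3) ≠ 0 := by nlinarith
  have d4 : ((m:ℝ)+2-1) ≠ 0 := by nlinarith
  field_simp
  ring

/-- $t_{ind}(R_5;R_{2n+1}) \to 1/384$ and $p(R_5;R_{2n+1}) = 24\, t_{ind} \to 1/16$. -/
theorem stmt_1 :
    Filter.Tendsto tindR5 Filter.atTop (nhds (1/384)) ∧
    Filter.Tendsto (fun n => 24 * tindR5 n) Filter.atTop (nhds (1/16)) := by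
  refine ⟨tendsto_main, ?_⟩
  have h2 := tendsto_main.const_mul (24:ℝ)
  have h3 : (24:ℝ) * (1/384) = 1/16 := by norm_num
  rw [h3] at h2
  exact h2
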